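/- For every integer k ≥ 1, define a_k := (d⁺_k − d⁺_{k+2})² and ε_k := d⁺_k·d⁺_{k+2} + d⁺_{k+2}·d⁺_{k+4} − 2·(d⁺_{k+2})², where d⁺_j := (j−2)²·(j+2)/(4j²), and define λ¹_k := (a_k + a_{k+2} − √((a_k − a_{k+2})² + 4·ε_k²))/2 and λ²_k := (a_k + a_{k+2} + √((a_k − a_{k+2})² + 4·ε_k²))/2. Then for every integer k ≥ 1 one has 1/50 < λ¹_k, λ²_k < 3/5, and 1/50 < a_k < 3/5. In particular the symmetric matrix A_k with diagonal entries a_k, a_{k+2} and off-diagonal entries ε_k is positive definite. -/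

import Mathlib

open Real Matrix

set_option maxHeartbeats 3200000

/-- The tridiagonal coefficient `d⁺_j = (j−2)²·(j+2)/(4j²)`. -/
noncomputable def dPlus (j : ℕ) : ℝ :=
  ((j : ℝ) - 2) ^ 2 * ((j : ℝ) + 2) / (4 * (j : ℝ) ^ 2)

/-- The diagonal entry `a_k = (d⁺_k − d⁺_{k+2})²`. -/
noncomputable def aCoeff (k : ℕ) : ℝ := (dPlus k - dPlus (k + 2)) ^ 2

/-- The off-diagonal entry `ε_k = d⁺_k·d⁺_{k+2} + d⁺_{k+2}·d⁺_{k+4} − 2·(d⁺_{k+2})²`. -/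
noncomputable def epsCoeff (k : ℕ) : ℝ :=
  dPlus k * dPlus (k + 2) + dPlus (k + 2) * dPlus (k + 4) - 2 * (dPlus (k + 2)) ^ 2

/-- The smaller eigenvalue of the symmetric matrix `A_k`. -/
noncomputable def lamOne (k : ℕ) : ℝ :=
  (aCoeff k + aCoeff (k + 2) -
      Real.sqrt ((aCoeff k - aCoeff (k + 2)) ^ 2 + 4 * (epsCoeff k) ^ 2)) / 2

/-- The larger eigenvalue of the symmetric matrix `A_k`. -/
noncomputable def lamTwo (k : ℕ) : ℝ :=
  (aCoeff k + aCoeff (k + 2) +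
      Real.sqrt ((aCoeff k - aCoeff (k + 2)) ^ 2 + 4 * (epsCoeff k) ^ 2)) / 2

lemma p1_pos (x : ℝ) (hx : 2 ≤ x) : 0 < (409600:ℝ) + (409600:ℝ) * x + (-307200:ℝ) * x ^ 2 + (-409600:ℝ) * x ^ 3 + (-53248:ℝ) * x ^ 4 + (72704:ℝ) * x ^ 5 + (48128:ℝ) * x ^ 6 + (11776:ℝ) * x ^ 7 + (1472:ℝ) * x ^ 8 := by
  have ht : (0:ℝ) ≤ x - 2 := by linarith
  have h1 : (0:ℝ) ≤ (14401536:ℝ) * (x - 2) ^ 1 := mul_nonneg (by norm_num) (pow_nonneg ht 1)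
  have h2 : (0:ℝ) ≤ (23875584:ℝ) * (x - 2) ^ 2 := mul_nonneg (by norm_num) (pow_nonneg ht 2)
  have h3 : (0:ℝ) ≤ (19005440:ℝ) * (x - 2) ^ 3 := mul_nonneg (by norm_num) (pow_nonneg ht 3)
  have h4 : (0:ℝ) ≤ (8507392:ℝ) * (x - 2) ^ 4 := mul_nonneg (by norm_num) (pow_nonneg ht 4)
  have h5 : (0:ℝ) ≤ (2298880:ℝ) * (x - 2) ^ 5 := mul_nonneg (by norm_num) (pow_nonneg ht 5)
  have h6 : (0:ℝ) ≤ (377856:ℝ) * (x - 2) ^ 6 := mul_nonneg (by norm_num) (pow_nonneg ht 6)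
  have h7 : (0:ℝ) ≤ (35328:ℝ) * (x - 2) ^ 7 := mul_nonneg (by norm_num) (pow_nonneg ht 7)
  have h8 : (0:ℝ) ≤ (1472:ℝ) * (x - 2) ^ 8 := mul_nonneg (by norm_num) (pow_nonneg ht 8)
  have key : (409600:ℝ) + (409600:ℝ) * x + (-307200:ℝ) * x ^ 2 + (-409600:ℝ) * x ^ 3 + (-53248:ℝ) * x ^ 4 + (72704:ℝ) * x ^ 5 + (48128:ℝ) * x ^ 6 + (11776:ℝ) * x ^ 7 + (1472:ℝ) * x ^ 8 = (3162112:ℝ) + (14401536:ℝ) * (x - 2) ^ 1 + (23875584:ℝ) * (x - 2) ^ 2 + (19005440:ℝ) * (x - 2) ^ 3 + (8507392:ℝ) * (x - 2) ^ 4 + (2298880:ℝ) * (x - 2) ^ 5 + (377856:ℝ) * (x - 2) ^ 6 + (35328:ℝ) * (x - 2) ^ 7 + (1472:ℝ) * (x - 2) ^ 8 := by ring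
  linarith [key, h1, h2, h3, h4, h5, h6, h7, h8]

lemma p2_pos (x : ℝ) (hx : 2 ≤ x) : 0 < (-81920:ℝ) + (-81920:ℝ) * x + (61440:ℝ) * x ^ 2 + (81920:ℝ) * x ^ 3 + (22528:ℝ) * x ^ 4 + (9216:ℝ) * x ^ 5 + (8192:ℝ) * x ^ 6 + (3584:ℝ) * x ^ 7 + (448:ℝ) * x ^ 8 := by
  have ht : (0:ℝ) ≤ x - 2 := by linarith
  have h1 : (0:ℝ) ≤ (6242304:ℝ) * (x - 2) ^ 1 := mul_nonneg (by norm_num) (pow_nonneg ht 1)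
  have h2 : (0:ℝ) ≤ (7008256:ℝ) * (x - 2) ^ 2 := mul_nonneg (by norm_num) (pow_nonneg ht 2)
  have h3 : (0:ℝ) ≤ (4751360:ℝ) * (x - 2) ^ 3 := mul_nonneg (by norm_num) (pow_nonneg ht 3)
  have h4 : (0:ℝ) ≤ (2111488:ℝ) * (x - 2) ^ 4 := mul_nonneg (by norm_num) (pow_nonneg ht 4)
  have h5 : (0:ℝ) ≤ (609280:ℝ) * (x - 2) ^ 5 := mul_nonneg (by norm_num) (pow_nonneg ht 5)
  have h6 : (0:ℝ) ≤ (108544:ℝ) * (x - 2) ^ 6 := mul_nonneg (by norm_num) (pow_nonneg ht 6)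
  have h7 : (0:ℝ) ≤ (10752:ℝ) * (x - 2) ^ 7 := mul_nonneg (by norm_num) (pow_nonneg ht 7)
  have h8 : (0:ℝ) ≤ (448:ℝ) * (x - 2) ^ 8 := mul_nonneg (by norm_num) (pow_nonneg ht 8)
  have key : (-81920:ℝ) + (-81920:ℝ) * x + (61440:ℝ) * x ^ 2 + (81920:ℝ) * x ^ 3 + (22528:ℝ) * x ^ 4 + (9216:ℝ) * x ^ 5 + (8192:ℝ) * x ^ 6 + (3584:ℝ) * x ^ 7 + (448:ℝ) * x ^ 8 = (2408448:ℝ) + (6242304:ℝ) * (x - 2) ^ 1 + (7008256:ℝ) * (x - 2) ^ 2 + (4751360:ℝ) * (x - 2) ^ 3 + (2111488:ℝ) * (x - 2) ^ 4 + (609280:ℝ) * (x - 2) ^ 5 + (108544:ℝ) * (x - 2) ^ 6 + (10752:ℝ) * (x - 2) ^ 7 + (448:ℝ) * (x - 2) ^ 8 := by ring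
  linarith [key, h1, h2, h3, h4, h5, h6, h7, h8]

lemma p3_pos (x : ℝ) (hx : 2 ≤ x) : 0 < (687194767360000:ℝ) + (2061584302080000:ℝ) * x + (1288490188800000:ℝ) * x ^ 2 + (-2190433320960000:ℝ) * x ^ 3 + (-3611960121753600:ℝ) * x ^ 4 + (-988486723174400:ℝ) * x ^ 5 + (1733609861939200:ℝ) * x ^ 6 + (1752078221312000:ℝ) * x ^ 7 + (400905400745984:ℝ) * x ^ 8 + (-399037358407680:ℝ) * x ^ 9 + (-381399001464832:ℝ) * x ^ 10 + (-129598356455424:ℝ) * x ^ 11 + (5003737563136:ℝ) * x ^ 12 + (25593206800384:ℝ) * x ^ 13 + (13652602126336:ℝ) * x ^ 14 + (4403046121472:ℝ) * x ^ 15 + (985816629248:ℝ) * x ^ 16 + (155459780608:ℝ) * x ^ 17 + (16689135616:ℝ) * x ^ 18 + (1109393408:ℝ) * x ^ 19 + (34668544:ℝ) * x ^ 20 := by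
  have ht : (0:ℝ) ≤ x - 2 := by linarith
  have h1 : (0:ℝ) ≤ (1851595448238735360:ℝ) * (x - 2) ^ 1 := mul_nonneg (by norm_num) (pow_nonneg ht 1)
  have h2 : (0:ℝ) ≤ (8379896053977055232:ℝ) * (x - 2) ^ 2 := mul_nonneg (by norm_num) (pow_nonneg ht 2)
  have h3 : (0:ℝ) ≤ (21647368477376249856:ℝ) * (x - 2) ^ 3 := mul_nonneg (by norm_num) (pow_nonneg ht 3)
  have h4 : (0:ℝ) ≤ (36495844295445577728:ℝ) * (x - 2) ^ 4 := mul_nonneg (by norm_num) (pow_nonneg ht 4)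
  have h5 : (0:ℝ) ≤ (43267439508418723840:ℝ) * (x - 2) ^ 5 := mul_nonneg (by norm_num) (pow_nonneg ht 5)
  have h6 : (0:ℝ) ≤ (37863462818518401024:ℝ) * (x - 2) ^ 6 := mul_nonneg (by norm_num) (pow_nonneg ht 6)
  have h7 : (0:ℝ) ≤ (25297634997978529792:ℝ) * (x - 2) ^ 7 := mul_nonneg (by norm_num) (pow_nonneg ht 7)
  have h8 : (0:ℝ) ≤ (13218156058154893312:ℝ) * (x - 2) ^ 8 := mul_nonneg (by norm_num) (pow_nonneg ht 8)
  have h9 : (0:ℝ) ≤ (5493429934426685440:ℝ) * (x - 2) ^ 9 := mul_nonneg (by norm_num) (pow_nonneg ht 9)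
  have h10 : (0:ℝ) ≤ (1836639620897439744:ℝ) * (x - 2) ^ 10 := mul_nonneg (by norm_num) (pow_nonneg ht 10)
  have h11 : (0:ℝ) ≤ (497251787670028288:ℝ) * (x - 2) ^ 11 := mul_nonneg (by norm_num) (pow_nonneg ht 11)
  have h12 : (0:ℝ) ≤ (109259078626181120:ℝ) * (x - 2) ^ 12 := mul_nonneg (by norm_num) (pow_nonneg ht 12)
  have h13 : (0:ℝ) ≤ (19439677501079552:ℝ) * (x - 2) ^ 13 := mul_nonneg (by norm_num) (pow_nonneg ht 13)
  have h14 : (0:ℝ) ≤ (2780538280607744:ℝ) * (x - 2) ^ 14 := mul_nonneg (by norm_num) (pow_nonneg ht 14)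
  have h15 : (0:ℝ) ≤ (315466153197568:ℝ) * (x - 2) ^ 15 := mul_nonneg (by norm_num) (pow_nonneg ht 15)
  have h16 : (0:ℝ) ≤ (27772723396608:ℝ) * (x - 2) ^ 16 := mul_nonneg (by norm_num) (pow_nonneg ht 16)
  have h17 : (0:ℝ) ≤ (1831270875136:ℝ) * (x - 2) ^ 17 := mul_nonneg (by norm_num) (pow_nonneg ht 17)
  have h18 : (0:ℝ) ≤ (85194178560:ℝ) * (x - 2) ^ 18 := mul_nonneg (by norm_num) (pow_nonneg ht 18)
  have h19 : (0:ℝ) ≤ (2496135168:ℝ) * (x - 2) ^ 19 := mul_nonneg (by norm_num) (pow_nonneg ht 19)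
  have h20 : (0:ℝ) ≤ (34668544:ℝ) * (x - 2) ^ 20 := mul_nonneg (by norm_num) (pow_nonneg ht 20)
  have key : (687194767360000:ℝ) + (2061584302080000:ℝ) * x + (1288490188800000:ℝ) * x ^ 2 + (-2190433320960000:ℝ) * x ^ 3 + (-3611960121753600:ℝ) * x ^ 4 + (-988486723174400:ℝ) * x ^ 5 + (1733609861939200:ℝ) * x ^ 6 + (1752078221312000:ℝ) * x ^ 7 + (400905400745984:ℝ) * x ^ 8 + (-399037358407680:ℝ) * x ^ 9 + (-381399001464832:ℝ) * x ^ 10 + (-129598356455424:ℝ) * x ^ 11 + (5003737563136:ℝ) * x ^ 12 + (25593206800384:ℝ) * x ^ 13 + (13652602126336:ℝ) * x ^ 14 + (4403046121472:ℝ) * x ^ 15 + (985816629248:ℝ) * x ^ 16 + (155459780608:ℝ) * x ^ 17 + (16689135616:ℝ) * x ^ 18 + (1109393408:ℝ) * x ^ 19 + (34668544:ℝ) * x ^ 20 = (168683569240080384:ℝ) + (1851595448238735360:ℝ) * (x - 2) ^ 1 + (8379896053977055232:ℝ) * (x - 2) ^ 2 + (21647368477376249856:ℝ) * (x - 2) ^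 3 + (36495844295445577728:ℝ) * (x - 2) ^ 4 + (43267439508418723840:ℝ) * (x - 2) ^ 5 + (37863462818518401024:ℝ) * (x - 2) ^ 6 + (25297634997978529792:ℝ) * (x - 2) ^ 7 + (13218156058154893312:ℝ) * (x - 2) ^ 8 + (5493429934426685440:ℝ) * (x - 2) ^ 9 + (1836639620897439744:ℝ) * (x - 2) ^ 10 + (497251787670028288:ℝ) * (x - 2) ^ 11 + (109259078626181120:ℝ) * (x - 2) ^ 12 + (19439677501079552:ℝ) * (x - 2) ^ 13 + (2780538280607744:ℝ) * (x - 2) ^ 14 + (315466153197568:ℝ) * (x - 2) ^ 15 + (27772723396608:ℝ) * (x - 2) ^ 16 + (1831270875136:ℝ) * (x - 2) ^ 17 + (85194178560:ℝ) * (x - 2) ^ 18 + (2496135168:ℝ) * (x - 2) ^ 19 + (34668544:ℝ) * (x - 2) ^ 20 := by ring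
  linarith [key, h1, h2, h3, h4, h5, h6, h7, h8, h9, h10, h11, h12, h13, h14, h15, h16, h17, h18, h19, h20]

lemma p4_pos (x : ℝ) (hx : 2 ≤ x) : 0 < (-2588795832631296:ℝ) * x ^ 4 + (-8163470109310976:ℝ) * x ^ 5 + (-7837716167262208:ℝ) * x ^ 6 + (3133631761481728:ℝ) * x ^ 7 + (15143144421064704:ℝ) * x ^ 8 + (18314050324660224:ℝ) * x ^ 9 + (13601600396328960:ℝ) * x ^ 10 + (7202024366014464:ℝ) * x ^ 11 + (2872658106515456:ℝ) * x ^ 12 + (882052702404608:ℝ) * x ^ 13 + (209488749527040:ℝ) * x ^ 14 + (38246549553152:ℝ) * x ^ 15 + (5281387905024:ℝ) * x ^ 16 + (535451140096:ℝ) * x ^ 17 + (37767610368:ℝ) * x ^ 18 + (1664090112:ℝ) * x ^ 19 + (34668544:ℝ) * x ^ 20 := by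
  have ht : (0:ℝ) ≤ x - 2 := by linarith
  have h1 : (0:ℝ) ≤ (362083638154297868288:ℝ) * (x - 2) ^ 1 := mul_nonneg (by norm_num) (pow_nonneg ht 1)
  have h2 : (0:ℝ) ≤ (929754706282633232384:ℝ) * (x - 2) ^ 2 := mul_nonneg (by norm_num) (pow_nonneg ht 2)
  have h3 : (0:ℝ) ≤ (1479540220659759054848:ℝ) * (x - 2) ^ 3 := mul_nonneg (by norm_num) (pow_nonneg ht 3)
  have h4 : (0:ℝ) ≤ (1638646380607808995328:ℝ) * (x - 2) ^ 4 := mul_nonneg (by norm_num) (pow_nonneg ht 4)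
  have h5 : (0:ℝ) ≤ (1344473779763127779328:ℝ) * (x - 2) ^ 5 := mul_nonneg (by norm_num) (pow_nonneg ht 5)
  have h6 : (0:ℝ) ≤ (849034789213041590272:ℝ) * (x - 2) ^ 6 := mul_nonneg (by norm_num) (pow_nonneg ht 6)
  have h7 : (0:ℝ) ≤ (423100416463856467968:ℝ) * (x - 2) ^ 7 := mul_nonneg (by norm_num) (pow_nonneg ht 7)
  have h8 : (0:ℝ) ≤ (169175725545793519616:ℝ) * (x - 2) ^ 8 := mul_nonneg (by norm_num) (pow_nonneg ht 8)
  have h9 : (0:ℝ) ≤ (54868627573102870528:ℝ) * (x - 2) ^ 9 := mul_nonneg (by norm_num) (pow_nonneg ht 9)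
  have h10 : (0:ℝ) ≤ (14527114351824863232:ℝ) * (x - 2) ^ 10 := mul_nonneg (by norm_num) (pow_nonneg ht 10)
  have h11 : (0:ℝ) ≤ (3148030099652083712:ℝ) * (x - 2) ^ 11 := mul_nonneg (by norm_num) (pow_nonneg ht 11)
  have h12 : (0:ℝ) ≤ (557821653518647296:ℝ) * (x - 2) ^ 12 := mul_nonneg (by norm_num) (pow_nonneg ht 12)
  have h13 : (0:ℝ) ≤ (80450464725860352:ℝ) * (x - 2) ^ 13 := mul_nonneg (by norm_num) (pow_nonneg ht 13)
  have h14 : (0:ℝ) ≤ (9359109287575552:ℝ) * (x - 2) ^ 14 := mul_nonneg (by norm_num) (pow_nonneg ht 14)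
  have h15 : (0:ℝ) ≤ (865483590991872:ℝ) * (x - 2) ^ 15 := mul_nonneg (by norm_num) (pow_nonneg ht 15)
  have h16 : (0:ℝ) ≤ (62188036292608:ℝ) * (x - 2) ^ 16 := mul_nonneg (by norm_num) (pow_nonneg ht 16)
  have h17 : (0:ℝ) ≤ (3349499871232:ℝ) * (x - 2) ^ 17 := mul_nonneg (by norm_num) (pow_nonneg ht 17)
  have h18 : (0:ℝ) ≤ (127351128064:ℝ) * (x - 2) ^ 18 := mul_nonneg (by norm_num) (pow_nonneg ht 18)
  have h19 : (0:ℝ) ≤ (3050831872:ℝ) * (x - 2) ^ 19 := mul_nonneg (by norm_num) (pow_nonneg ht 19)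
  have h20 : (0:ℝ) ≤ (34668544:ℝ) * (x - 2) ^ 20 := mul_nonneg (by norm_num) (pow_nonneg ht 20)
  have key : (-2588795832631296:ℝ) * x ^ 4 + (-8163470109310976:ℝ) * x ^ 5 + (-7837716167262208:ℝ) * x ^ 6 + (3133631761481728:ℝ) * x ^ 7 + (15143144421064704:ℝ) * x ^ 8 + (18314050324660224:ℝ) * x ^ 9 + (13601600396328960:ℝ) * x ^ 10 + (7202024366014464:ℝ) * x ^ 11 + (2872658106515456:ℝ) * x ^ 12 + (882052702404608:ℝ) * x ^ 13 + (209488749527040:ℝ) * x ^ 14 + (38246549553152:ℝ) * x ^ 15 + (5281387905024:ℝ) * x ^ 16 + (535451140096:ℝ) * x ^ 17 + (37767610368:ℝ) * x ^ 18 + (1664090112:ℝ) * x ^ 19 + (34668544:ℝ) * x ^ 20 = (65632885706906927104:ℝ) + (362083638154297868288:ℝ) * (x - 2) ^ 1 + (929754706282633232384:ℝ) * (x - 2) ^ 2 + (1479540220659759054848:ℝ) * (x - 2) ^ 3 + (1638646380607808995328:ℝ) * (x - 2) ^ 4 + (1344473779763127779328:ℝ) * (x - 2) ^ 5 + (849034789213041590272:ℝ)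 * (x - 2) ^ 6 + (423100416463856467968:ℝ) * (x - 2) ^ 7 + (169175725545793519616:ℝ) * (x - 2) ^ 8 + (54868627573102870528:ℝ) * (x - 2) ^ 9 + (14527114351824863232:ℝ) * (x - 2) ^ 10 + (3148030099652083712:ℝ) * (x - 2) ^ 11 + (557821653518647296:ℝ) * (x - 2) ^ 12 + (80450464725860352:ℝ) * (x - 2) ^ 13 + (9359109287575552:ℝ) * (x - 2) ^ 14 + (865483590991872:ℝ) * (x - 2) ^ 15 + (62188036292608:ℝ) * (x - 2) ^ 16 + (3349499871232:ℝ) * (x - 2) ^ 17 + (127351128064:ℝ) * (x - 2) ^ 18 + (3050831872:ℝ) * (x - 2) ^ 19 + (34668544:ℝ) * (x - 2) ^ 20 := by ring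
  linarith [key, h1, h2, h3, h4, h5, h6, h7, h8, h9, h10, h11, h12, h13, h14, h15, h16, h17, h18, h19, h20]

lemma p5_pos (x : ℝ) (hx : 2 ≤ x) : 0 < (27487790694400:ℝ) + (82463372083200:ℝ) * x + (51539607552000:ℝ) * x ^ 2 + (-87617332838400:ℝ) * x ^ 3 + (-152449864171520:ℝ) * x ^ 4 + (-71425306132480:ℝ) * x ^ 5 + (20519206256640:ℝ) * x ^ 6 + (42681237504000:ℝ) * x ^ 7 + (32316676112384:ℝ) * x ^ 8 + (23528367718400:ℝ) * x ^ 9 + (16783390015488:ℝ) * x ^ 10 + (9770647945216:ℝ) * x ^ 11 + (4527935717376:ℝ) * x ^ 12 + (1840024387584:ℝ) * x ^ 13 + (710573817856:ℝ) * x ^ 14 + (243303186432:ℝ) * x ^ 15 + (64474841088:ℝ) * x ^ 16 + (11993612288:ℝ) * x ^ 17 + (1453326336:ℝ) * x ^ 18 + (102760448:ℝ) * x ^ 19 + (3211264:ℝ) * x ^ 20 := by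
  have ht : (0:ℝ) ≤ x - 2 := by linarith
  have h1 : (0:ℝ) ≤ (696679429539102720:ℝ) * (x - 2) ^ 1 := mul_nonneg (by norm_num) (pow_nonneg ht 1)
  have h2 : (0:ℝ) ≤ (1929907957768650752:ℝ) * (x - 2) ^ 2 := mul_nonneg (by norm_num) (pow_nonneg ht 2)
  have h3 : (0:ℝ) ≤ (3385248623766798336:ℝ) * (x - 2) ^ 3 := mul_nonneg (by norm_num) (pow_nonneg ht 3)
  have h4 : (0:ℝ) ≤ (4238962030561722368:ℝ) * (x - 2) ^ 4 := mul_nonneg (by norm_num) (pow_nonneg ht 4)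
  have h5 : (0:ℝ) ≤ (4035678617101926400:ℝ) * (x - 2) ^ 5 := mul_nonneg (by norm_num) (pow_nonneg ht 5)
  have h6 : (0:ℝ) ≤ (3030641512330297344:ℝ) * (x - 2) ^ 6 := mul_nonneg (by norm_num) (pow_nonneg ht 6)
  have h7 : (0:ℝ) ≤ (1835910225526259712:ℝ) * (x - 2) ^ 7 := mul_nonneg (by norm_num) (pow_nonneg ht 7)
  have h8 : (0:ℝ) ≤ (909377502311350272:ℝ) * (x - 2) ^ 8 := mul_nonneg (by norm_num) (pow_nonneg ht 8)
  have h9 : (0:ℝ) ≤ (371040769781268480:ℝ) * (x - 2) ^ 9 := mul_nonneg (by norm_num) (pow_nonneg ht 9)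
  have h10 : (0:ℝ) ≤ (125046545149067264:ℝ) * (x - 2) ^ 10 := mul_nonneg (by norm_num) (pow_nonneg ht 10)
  have h11 : (0:ℝ) ≤ (34771754714923008:ℝ) * (x - 2) ^ 11 := mul_nonneg (by norm_num) (pow_nonneg ht 11)
  have h12 : (0:ℝ) ≤ (7942094979072000:ℝ) * (x - 2) ^ 12 := mul_nonneg (by norm_num) (pow_nonneg ht 12)
  have h13 : (0:ℝ) ≤ (1478256809213952:ℝ) * (x - 2) ^ 13 := mul_nonneg (by norm_num) (pow_nonneg ht 13)
  have h14 : (0:ℝ) ≤ (221560442978304:ℝ) * (x - 2) ^ 14 := mul_nonneg (by norm_num) (pow_nonneg ht 14)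
  have h15 : (0:ℝ) ≤ (26284327436288:ℝ) * (x - 2) ^ 15 := mul_nonneg (by norm_num) (pow_nonneg ht 15)
  have h16 : (0:ℝ) ≤ (2407229554688:ℝ) * (x - 2) ^ 16 := mul_nonneg (by norm_num) (pow_nonneg ht 16)
  have h17 : (0:ℝ) ≤ (163888234496:ℝ) * (x - 2) ^ 17 := mul_nonneg (by norm_num) (pow_nonneg ht 17)
  have h18 : (0:ℝ) ≤ (7798784000:ℝ) * (x - 2) ^ 18 := mul_nonneg (by norm_num) (pow_nonneg ht 18)
  have h19 : (0:ℝ) ≤ (231211008:ℝ) * (x - 2) ^ 19 := mul_nonneg (by norm_num) (pow_nonneg ht 19)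
  have h20 : (0:ℝ) ≤ (3211264:ℝ) * (x - 2) ^ 20 := mul_nonneg (by norm_num) (pow_nonneg ht 20)
  have key : (27487790694400:ℝ) + (82463372083200:ℝ) * x + (51539607552000:ℝ) * x ^ 2 + (-87617332838400:ℝ) * x ^ 3 + (-152449864171520:ℝ) * x ^ 4 + (-71425306132480:ℝ) * x ^ 5 + (20519206256640:ℝ) * x ^ 6 + (42681237504000:ℝ) * x ^ 7 + (32316676112384:ℝ) * x ^ 8 + (23528367718400:ℝ) * x ^ 9 + (16783390015488:ℝ) * x ^ 10 + (9770647945216:ℝ) * x ^ 11 + (4527935717376:ℝ) * x ^ 12 + (1840024387584:ℝ) * x ^ 13 + (710573817856:ℝ) * x ^ 14 + (243303186432:ℝ) * x ^ 15 + (64474841088:ℝ) * x ^ 16 + (11993612288:ℝ) * x ^ 17 + (1453326336:ℝ) * x ^ 18 + (102760448:ℝ) * x ^ 19 + (3211264:ℝ) * x ^ 20 = (118735504769286144:ℝ) + (696679429539102720:ℝ) * (x - 2) ^ 1 + (1929907957768650752:ℝ) * (x - 2) ^ 2 + (3385248623766798336:ℝ) * (x - 2) ^ 3 + (4238962030561722368:ℝ)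 * (x - 2) ^ 4 + (4035678617101926400:ℝ) * (x - 2) ^ 5 + (3030641512330297344:ℝ) * (x - 2) ^ 6 + (1835910225526259712:ℝ) * (x - 2) ^ 7 + (909377502311350272:ℝ) * (x - 2) ^ 8 + (371040769781268480:ℝ) * (x - 2) ^ 9 + (125046545149067264:ℝ) * (x - 2) ^ 10 + (34771754714923008:ℝ) * (x - 2) ^ 11 + (7942094979072000:ℝ) * (x - 2) ^ 12 + (1478256809213952:ℝ) * (x - 2) ^ 13 + (221560442978304:ℝ) * (x - 2) ^ 14 + (26284327436288:ℝ) * (x - 2) ^ 15 + (2407229554688:ℝ) * (x - 2) ^ 16 + (163888234496:ℝ) * (x - 2) ^ 17 + (7798784000:ℝ) * (x - 2) ^ 18 + (231211008:ℝ) * (x - 2) ^ 19 + (3211264:ℝ) * (x - 2) ^ 20 := by ring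
  linarith [key, h1, h2, h3, h4, h5, h6, h7, h8, h9, h10, h11, h12, h13, h14, h15, h16, h17, h18, h19, h20]

lemma p6_pos (x : ℝ) (hx : 2 ≤ x) : 0 < (-17141214478336:ℝ) * x ^ 4 + (96267396972544:ℝ) * x ^ 5 + (620706526134272:ℝ) * x ^ 6 + (1374413157040128:ℝ) * x ^ 7 + (1753803992858624:ℝ) * x ^ 8 + (1519906784804864:ℝ) * x ^ 9 + (973801961553920:ℝ) * x ^ 10 + (483946580148224:ℝ) * x ^ 11 + (190952333377536:ℝ) * x ^ 12 + (60121455525888:ℝ) * x ^ 13 + (14987045109760:ℝ) * x ^ 14 + (2908363948032:ℝ) * x ^ 15 + (428305547264:ℝ) * x ^ 16 + (46080720896:ℝ) * x ^ 17 + (3405774848:ℝ) * x ^ 18 + (154140672:ℝ) * x ^ 19 + (3211264:ℝ) * x ^ 20 := by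
  have ht : (0:ℝ) ≤ x - 2 := by linarith
  have h1 : (0:ℝ) ≤ (27089383205831180288:ℝ) * (x - 2) ^ 1 := mul_nonneg (by norm_num) (pow_nonneg ht 1)
  have h2 : (0:ℝ) ≤ (67754984380200648704:ℝ) * (x - 2) ^ 2 := mul_nonneg (by norm_num) (pow_nonneg ht 2)
  have h3 : (0:ℝ) ≤ (105874583779643752448:ℝ) * (x - 2) ^ 3 := mul_nonneg (by norm_num) (pow_nonneg ht 3)
  have h4 : (0:ℝ) ≤ (116027240203658723328:ℝ) * (x - 2) ^ 4 := mul_nonneg (by norm_num) (pow_nonneg ht 4)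
  have h5 : (0:ℝ) ≤ (94876219690564190208:ℝ) * (x - 2) ^ 5 := mul_nonneg (by norm_num) (pow_nonneg ht 5)
  have h6 : (0:ℝ) ≤ (60111859299785900032:ℝ) * (x - 2) ^ 6 := mul_nonneg (by norm_num) (pow_nonneg ht 6)
  have h7 : (0:ℝ) ≤ (30237752922103349248:ℝ) * (x - 2) ^ 7 := mul_nonneg (by norm_num) (pow_nonneg ht 7)
  have h8 : (0:ℝ) ≤ (12270365815483662336:ℝ) * (x - 2) ^ 8 := mul_nonneg (by norm_num) (pow_nonneg ht 8)
  have h9 : (0:ℝ) ≤ (4057487260587655168:ℝ) * (x - 2) ^ 9 := mul_nonneg (by norm_num) (pow_nonneg ht 9)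
  have h10 : (0:ℝ) ≤ (1099376754931269632:ℝ) * (x - 2) ^ 10 := mul_nonneg (by norm_num) (pow_nonneg ht 10)
  have h11 : (0:ℝ) ≤ (244483306408640512:ℝ) * (x - 2) ^ 11 := mul_nonneg (by norm_num) (pow_nonneg ht 11)
  have h12 : (0:ℝ) ≤ (44536917819129856:ℝ) * (x - 2) ^ 12 := mul_nonneg (by norm_num) (pow_nonneg ht 12)
  have h13 : (0:ℝ) ≤ (6608137226289152:ℝ) * (x - 2) ^ 13 := mul_nonneg (by norm_num) (pow_nonneg ht 13)
  have h14 : (0:ℝ) ≤ (790571601887232:ℝ) * (x - 2) ^ 14 := mul_nonneg (by norm_num) (pow_nonneg ht 14)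
  have h15 : (0:ℝ) ≤ (75067337736192:ℝ) * (x - 2) ^ 15 := mul_nonneg (by norm_num) (pow_nonneg ht 15)
  have h16 : (0:ℝ) ≤ (5523219939328:ℝ) * (x - 2) ^ 16 := mul_nonneg (by norm_num) (pow_nonneg ht 16)
  have h17 : (0:ℝ) ≤ (303407562752:ℝ) * (x - 2) ^ 17 := mul_nonneg (by norm_num) (pow_nonneg ht 17)
  have h18 : (0:ℝ) ≤ (11703681024:ℝ) * (x - 2) ^ 18 := mul_nonneg (by norm_num) (pow_nonneg ht 18)
  have h19 : (0:ℝ) ≤ (282591232:ℝ) * (x - 2) ^ 19 := mul_nonneg (by norm_num) (pow_nonneg ht 19)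
  have h20 : (0:ℝ) ≤ (3211264:ℝ) * (x - 2) ^ 20 := mul_nonneg (by norm_num) (pow_nonneg ht 20)
  have key : (-17141214478336:ℝ) * x ^ 4 + (96267396972544:ℝ) * x ^ 5 + (620706526134272:ℝ) * x ^ 6 + (1374413157040128:ℝ) * x ^ 7 + (1753803992858624:ℝ) * x ^ 8 + (1519906784804864:ℝ) * x ^ 9 + (973801961553920:ℝ) * x ^ 10 + (483946580148224:ℝ) * x ^ 11 + (190952333377536:ℝ) * x ^ 12 + (60121455525888:ℝ) * x ^ 13 + (14987045109760:ℝ) * x ^ 14 + (2908363948032:ℝ) * x ^ 15 + (428305547264:ℝ) * x ^ 16 + (46080720896:ℝ) * x ^ 17 + (3405774848:ℝ) * x ^ 18 + (154140672:ℝ) * x ^ 19 + (3211264:ℝ) * x ^ 20 = (5084509347317284864:ℝ) + (27089383205831180288:ℝ) * (x - 2) ^ 1 + (67754984380200648704:ℝ) * (x - 2) ^ 2 + (105874583779643752448:ℝ) * (x - 2) ^ 3 + (116027240203658723328:ℝ) * (x - 2) ^ 4 + (94876219690564190208:ℝ) * (x - 2) ^ 5 + (60111859299785900032:ℝ) * (x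 - 2) ^ 6 + (30237752922103349248:ℝ) * (x - 2) ^ 7 + (12270365815483662336:ℝ) * (x - 2) ^ 8 + (4057487260587655168:ℝ) * (x - 2) ^ 9 + (1099376754931269632:ℝ) * (x - 2) ^ 10 + (244483306408640512:ℝ) * (x - 2) ^ 11 + (44536917819129856:ℝ) * (x - 2) ^ 12 + (6608137226289152:ℝ) * (x - 2) ^ 13 + (790571601887232:ℝ) * (x - 2) ^ 14 + (75067337736192:ℝ) * (x - 2) ^ 15 + (5523219939328:ℝ) * (x - 2) ^ 16 + (303407562752:ℝ) * (x - 2) ^ 17 + (11703681024:ℝ) * (x - 2) ^ 18 + (282591232:ℝ) * (x - 2) ^ 19 + (3211264:ℝ) * (x - 2) ^ 20 := by ring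
  linarith [key, h1, h2, h3, h4, h5, h6, h7, h8, h9, h10, h11, h12, h13, h14, h15, h16, h17, h18, h19, h20]

lemma aBounds2 (k : ℕ) (hk : 2 ≤ k) : 1/50 < aCoeff k ∧ aCoeff k < 3/5 := by
  have hx : (2:ℝ) ≤ (k:ℝ) := by exact_mod_cast hk
  have hx0 : (0:ℝ) < (k:ℝ) := by linarith
  have h0 : ((k:ℝ)) ≠ 0 := ne_of_gt hx0
  have h2 : ((k:ℝ)) + 2 ≠ 0 := by intro h; nlinarith
  have h4 : ((k:ℝ)) + 4 ≠ 0 := by intro h; nlinarith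
  have hd0 : (0:ℝ) < 4 * (k:ℝ) ^ 2 := by positivity
  have hd2 : (0:ℝ) < 4 * ((k:ℝ) + 2) ^ 2 := by nlinarith
  have hd4 : (0:ℝ) < 4 * ((k:ℝ) + 4) ^ 2 := by nlinarith
  have hnum_p1 := p1_pos (k:ℝ) hx
  have hdenpos_p1 : (0:ℝ) < (25:ℝ) * (4 * (k:ℝ) ^ 2) ^ 2 * (4 * ((k:ℝ) + 2) ^ 2) ^ 2 := (mul_pos (mul_pos (by norm_num : (0:ℝ) < (25:ℝ)) (pow_pos hd0 2)) (pow_pos hd2 2))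
  have key_p1 : aCoeff k - 1/50 = ((409600:ℝ) + (409600:ℝ) * (k:ℝ) + (-307200:ℝ) * (k:ℝ) ^ 2 + (-409600:ℝ) * (k:ℝ) ^ 3 + (-53248:ℝ) * (k:ℝ) ^ 4 + (72704:ℝ) * (k:ℝ) ^ 5 + (48128:ℝ) * (k:ℝ) ^ 6 + (11776:ℝ) * (k:ℝ) ^ 7 + (1472:ℝ) * (k:ℝ) ^ 8) / ((25:ℝ) * (4 * (k:ℝ) ^ 2) ^ 2 * (4 * ((k:ℝ) + 2) ^ 2) ^ 2) := by
    simp only [aCoeff, epsCoeff, dPlus]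
    push_cast
    rw [eq_div_iff (ne_of_gt hdenpos_p1)]
    field_simp
    ring
  have hpos_p1 : (0:ℝ) < aCoeff k - 1/50 := by
    rw [key_p1]; exact div_pos hnum_p1 hdenpos_p1
  have hnum_p2 := p2_pos (k:ℝ) hx
  have hdenpos_p2 : (0:ℝ) < (5:ℝ) * (4 * (k:ℝ) ^ 2) ^ 2 * (4 * ((k:ℝ) + 2) ^ 2) ^ 2 := (mul_pos (mul_pos (by norm_num : (0:ℝ) < (5:ℝ)) (pow_pos hd0 2)) (pow_pos hd2 2))
  have key_p2 : 3/5 - aCoeff k = ((-81920:ℝ) + (-81920:ℝ) * (k:ℝ) + (61440:ℝ) * (k:ℝ) ^ 2 + (81920:ℝ) * (k:ℝ) ^ 3 + (22528:ℝ) * (k:ℝ) ^ 4 + (9216:ℝ) * (k:ℝ) ^ 5 + (8192:ℝ) * (k:ℝ) ^ 6 + (3584:ℝ) * (k:ℝ) ^ 7 + (448:ℝ) * (k:ℝ) ^ 8) / ((5:ℝ) * (4 * (k:ℝ) ^ 2) ^ 2 * (4 * ((k:ℝ) + 2) ^ 2) ^ 2) := by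
    simp only [aCoeff, epsCoeff, dPlus]
    push_cast
    rw [eq_div_iff (ne_of_gt hdenpos_p2)]
    field_simp
    ring
  have hpos_p2 : (0:ℝ) < 3/5 - aCoeff k := by
    rw [key_p2]; exact div_pos hnum_p2 hdenpos_p2
  constructor <;> linarith

lemma eBounds2 (k : ℕ) (hk : 2 ≤ k) :
    epsCoeff k ^ 2 < (aCoeff k - 1/50) ^ 2 ∧ epsCoeff k ^ 2 < (aCoeff (k+2) - 1/50) ^ 2 ∧
    epsCoeff k ^ 2 < (3/5 - aCoeff k) ^ 2 ∧ epsCoeff k ^ 2 < (3/5 - aCoeff (k+2)) ^ 2 := by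
  have hx : (2:ℝ) ≤ (k:ℝ) := by exact_mod_cast hk
  have hx0 : (0:ℝ) < (k:ℝ) := by linarith
  have h0 : ((k:ℝ)) ≠ 0 := ne_of_gt hx0
  have h2 : ((k:ℝ)) + 2 ≠ 0 := by intro h; nlinarith
  have h4 : ((k:ℝ)) + 4 ≠ 0 := by intro h; nlinarith
  have hd0 : (0:ℝ) < 4 * (k:ℝ) ^ 2 := by positivity
  have hd2 : (0:ℝ) < 4 * ((k:ℝ) + 2) ^ 2 := by nlinarith
  have hd4 : (0:ℝ) < 4 * ((k:ℝ) + 4) ^ 2 := by nlinarith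
  have hnum_p3 := p3_pos (k:ℝ) hx
  have hdenpos_p3 : (0:ℝ) < (625:ℝ) * (4 * (k:ℝ) ^ 2) ^ 4 * (4 * ((k:ℝ) + 2) ^ 2) ^ 4 * (4 * ((k:ℝ) + 4) ^ 2) ^ 2 := (mul_pos (mul_pos (mul_pos (by norm_num : (0:ℝ) < (625:ℝ)) (pow_pos hd0 4)) (pow_pos hd2 4)) (pow_pos hd4 2))
  have key_p3 : (aCoeff k - 1/50) ^ 2 - epsCoeff k ^ 2 = ((687194767360000:ℝ) + (2061584302080000:ℝ) * (k:ℝ) + (1288490188800000:ℝ) * (k:ℝ) ^ 2 + (-2190433320960000:ℝ) * (k:ℝ) ^ 3 + (-3611960121753600:ℝ) * (k:ℝ) ^ 4 + (-988486723174400:ℝ) * (k:ℝ) ^ 5 + (1733609861939200:ℝ) * (k:ℝ) ^ 6 + (1752078221312000:ℝ) * (k:ℝ) ^ 7 + (400905400745984:ℝ) * (k:ℝ) ^ 8 + (-399037358407680:ℝ) * (k:ℝ) ^ 9 + (-381399001464832:ℝ) * (k:ℝ) ^ 10 + (-129598356455424:ℝ) * (k:ℝ) ^ 11 + (5003737563136:ℝ)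 * (k:ℝ) ^ 12 + (25593206800384:ℝ) * (k:ℝ) ^ 13 + (13652602126336:ℝ) * (k:ℝ) ^ 14 + (4403046121472:ℝ) * (k:ℝ) ^ 15 + (985816629248:ℝ) * (k:ℝ) ^ 16 + (155459780608:ℝ) * (k:ℝ) ^ 17 + (16689135616:ℝ) * (k:ℝ) ^ 18 + (1109393408:ℝ) * (k:ℝ) ^ 19 + (34668544:ℝ) * (k:ℝ) ^ 20) / ((625:ℝ) * (4 * (k:ℝ) ^ 2) ^ 4 * (4 * ((k:ℝ) + 2) ^ 2) ^ 4 * (4 * ((k:ℝ) + 4) ^ 2) ^ 2) := by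
    simp only [aCoeff, epsCoeff, dPlus]
    push_cast
    rw [eq_div_iff (ne_of_gt hdenpos_p3)]
    field_simp
    ring
  have hpos_p3 : (0:ℝ) < (aCoeff k - 1/50) ^ 2 - epsCoeff k ^ 2 := by
    rw [key_p3]; exact div_pos hnum_p3 hdenpos_p3
  have hnum_p4 := p4_pos (k:ℝ) hx
  have hdenpos_p4 : (0:ℝ) < (625:ℝ) * (4 * (k:ℝ) ^ 2) ^ 2 * (4 * ((k:ℝ) + 2) ^ 2) ^ 4 * (4 * ((k:ℝ) + 4) ^ 2) ^ 4 := (mul_pos (mul_pos (mul_pos (by norm_num : (0:ℝ) < (625:ℝ)) (pow_pos hd0 2)) (pow_pos hd2 4)) (pow_pos hd4 4))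
  have key_p4 : (aCoeff (k+2) - 1/50) ^ 2 - epsCoeff k ^ 2 = ((-2588795832631296:ℝ) * (k:ℝ) ^ 4 + (-8163470109310976:ℝ) * (k:ℝ) ^ 5 + (-7837716167262208:ℝ) * (k:ℝ) ^ 6 + (3133631761481728:ℝ) * (k:ℝ) ^ 7 + (15143144421064704:ℝ) * (k:ℝ) ^ 8 + (18314050324660224:ℝ) * (k:ℝ) ^ 9 + (13601600396328960:ℝ) * (k:ℝ) ^ 10 + (7202024366014464:ℝ) * (k:ℝ) ^ 11 + (2872658106515456:ℝ) * (k:ℝ) ^ 12 + (882052702404608:ℝ) * (k:ℝ) ^ 13 + (209488749527040:ℝ) * (k:ℝ) ^ 14 + (38246549553152:ℝ) * (k:ℝ) ^ 15 + (5281387905024:ℝ) * (k:ℝ) ^ 16 + (535451140096:ℝ) * (k:ℝ) ^ 17 + (37767610368:ℝ) * (k:ℝ) ^ 18 + (1664090112:ℝ) * (k:ℝ) ^ 19 + (34668544:ℝ) * (k:ℝ) ^ 20) / ((625:ℝ) * (4 * (k:ℝ) ^ 2) ^ 2 * (4 * ((k:ℝ) + 2) ^ 2) ^ 4 * (4 *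 ((k:ℝ) + 4) ^ 2) ^ 4) := by
    simp only [aCoeff, epsCoeff, dPlus]
    push_cast
    rw [eq_div_iff (ne_of_gt hdenpos_p4)]
    field_simp
    ring
  have hpos_p4 : (0:ℝ) < (aCoeff (k+2) - 1/50) ^ 2 - epsCoeff k ^ 2 := by
    rw [key_p4]; exact div_pos hnum_p4 hdenpos_p4
  have hnum_p5 := p5_pos (k:ℝ) hx
  have hdenpos_p5 : (0:ℝ) < (25:ℝ) * (4 * (k:ℝ) ^ 2) ^ 4 * (4 * ((k:ℝ) + 2) ^ 2) ^ 4 * (4 * ((k:ℝ) + 4) ^ 2) ^ 2 := (mul_pos (mul_pos (mul_pos (by norm_num : (0:ℝ) < (25:ℝ)) (pow_pos hd0 4)) (pow_pos hd2 4)) (pow_pos hd4 2))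
  have key_p5 : (3/5 - aCoeff k) ^ 2 - epsCoeff k ^ 2 = ((27487790694400:ℝ) + (82463372083200:ℝ) * (k:ℝ) + (51539607552000:ℝ) * (k:ℝ) ^ 2 + (-87617332838400:ℝ) * (k:ℝ) ^ 3 + (-152449864171520:ℝ) * (k:ℝ) ^ 4 + (-71425306132480:ℝ) * (k:ℝ) ^ 5 + (20519206256640:ℝ) * (k:ℝ) ^ 6 + (42681237504000:ℝ) * (k:ℝ) ^ 7 + (32316676112384:ℝ) * (k:ℝ) ^ 8 + (23528367718400:ℝ) * (k:ℝ) ^ 9 + (16783390015488:ℝ) * (k:ℝ) ^ 10 + (9770647945216:ℝ) * (k:ℝ) ^ 11 + (4527935717376:ℝ) * (k:ℝ) ^ 12 + (1840024387584:ℝ) * (k:ℝ) ^ 13 + (710573817856:ℝ) * (k:ℝ) ^ 14 + (243303186432:ℝ) * (k:ℝ) ^ 15 + (64474841088:ℝ) * (k:ℝ) ^ 16 + (11993612288:ℝ) * (k:ℝ) ^ 17 + (1453326336:ℝ) * (k:ℝ) ^ 18 + (102760448:ℝ) * (k:ℝ) ^ 19 + (3211264:ℝ) * (k:ℝ) ^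 20) / ((25:ℝ) * (4 * (k:ℝ) ^ 2) ^ 4 * (4 * ((k:ℝ) + 2) ^ 2) ^ 4 * (4 * ((k:ℝ) + 4) ^ 2) ^ 2) := by
    simp only [aCoeff, epsCoeff, dPlus]
    push_cast
    rw [eq_div_iff (ne_of_gt hdenpos_p5)]
    field_simp
    ring
  have hpos_p5 : (0:ℝ) < (3/5 - aCoeff k) ^ 2 - epsCoeff k ^ 2 := by
    rw [key_p5]; exact div_pos hnum_p5 hdenpos_p5
  have hnum_p6 := p6_pos (k:ℝ) hx
  have hdenpos_p6 : (0:ℝ) < (25:ℝ) * (4 * (k:ℝ) ^ 2) ^ 2 * (4 * ((k:ℝ) + 2) ^ 2) ^ 4 * (4 * ((k:ℝ) + 4) ^ 2) ^ 4 := (mul_pos (mul_pos (mul_pos (by norm_num : (0:ℝ) < (25:ℝ)) (pow_pos hd0 2)) (pow_pos hd2 4)) (pow_pos hd4 4))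
  have key_p6 : (3/5 - aCoeff (k+2)) ^ 2 - epsCoeff k ^ 2 = ((-17141214478336:ℝ) * (k:ℝ) ^ 4 + (96267396972544:ℝ) * (k:ℝ) ^ 5 + (620706526134272:ℝ) * (k:ℝ) ^ 6 + (1374413157040128:ℝ) * (k:ℝ) ^ 7 + (1753803992858624:ℝ) * (k:ℝ) ^ 8 + (1519906784804864:ℝ) * (k:ℝ) ^ 9 + (973801961553920:ℝ) * (k:ℝ) ^ 10 + (483946580148224:ℝ) * (k:ℝ) ^ 11 + (190952333377536:ℝ) * (k:ℝ) ^ 12 + (60121455525888:ℝ) * (k:ℝ) ^ 13 + (14987045109760:ℝ) * (k:ℝ) ^ 14 + (2908363948032:ℝ) * (k:ℝ) ^ 15 + (428305547264:ℝ) * (k:ℝ) ^ 16 + (46080720896:ℝ) * (k:ℝ) ^ 17 + (3405774848:ℝ) * (k:ℝ) ^ 18 + (154140672:ℝ) * (k:ℝ) ^ 19 + (3211264:ℝ) * (k:ℝ) ^ 20) / ((25:ℝ) * (4 * (k:ℝ) ^ 2) ^ 2 * (4 * ((k:ℝ) + 2) ^ 2) ^ 4 * (4 * ((k:ℝ) +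 4) ^ 2) ^ 4) := by
    simp only [aCoeff, epsCoeff, dPlus]
    push_cast
    rw [eq_div_iff (ne_of_gt hdenpos_p6)]
    field_simp
    ring
  have hpos_p6 : (0:ℝ) < (3/5 - aCoeff (k+2)) ^ 2 - epsCoeff k ^ 2 := by
    rw [key_p6]; exact div_pos hnum_p6 hdenpos_p6
  refine ⟨by linarith, by linarith, by linarith, by linarith⟩

lemma aB (k : ℕ) (hk : 1 ≤ k) : 1/50 < aCoeff k ∧ aCoeff k < 3/5 := by
  rcases eq_or_lt_of_le hk with h | h
  · rw [← h]; norm_num [aCoeff, dPlus]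
  · exact aBounds2 k h

lemma eB (k : ℕ) (hk : 1 ≤ k) :
    epsCoeff k ^ 2 < (aCoeff k - 1/50) ^ 2 ∧ epsCoeff k ^ 2 < (aCoeff (k+2) - 1/50) ^ 2 ∧
    epsCoeff k ^ 2 < (3/5 - aCoeff k) ^ 2 ∧ epsCoeff k ^ 2 < (3/5 - aCoeff (k+2)) ^ 2 := by
  rcases eq_or_lt_of_le hk with h | h
  · rw [← h]; norm_num [epsCoeff, aCoeff, dPlus]
  · exact eBounds2 k h

/-- For every `k ≥ 1`: `1/50 < λ¹_k, λ²_k < 3/5`, `1/50 < a_k < 3/5`, and the symmetric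
matrix `A_k = [[a_k, ε_k], [ε_k, a_{k+2}]]` is positive definite. -/
theorem eigenvalue_bounds (k : ℕ) (hk : 1 ≤ k) :
    (1 / 50 < lamOne k ∧ lamOne k < 3 / 5) ∧
      (1 / 50 < lamTwo k ∧ lamTwo k < 3 / 5) ∧
      (1 / 50 < aCoeff k ∧ aCoeff k < 3 / 5) ∧
      (!![aCoeff k, epsCoeff k; epsCoeff k, aCoeff (k + 2)] : Matrix (Fin 2) (Fin 2) ℝ).PosDef := by
  obtain ⟨ha1, ha2⟩ := aB k hk
  obtain ⟨hb1, hb2⟩ := aB (k+2) (by omega)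
  obtain ⟨he1, he2, he3, he4⟩ := eB k hk
  have hea : |epsCoeff k| < aCoeff k - 1/50 := abs_lt_of_sq_lt_sq he1 (by linarith)
  have heb : |epsCoeff k| < aCoeff (k+2) - 1/50 := abs_lt_of_sq_lt_sq he2 (by linarith)
  have hec : |epsCoeff k| < 3/5 - aCoeff k := abs_lt_of_sq_lt_sq he3 (by linarith)
  have hed : |epsCoeff k| < 3/5 - aCoeff (k+2) := abs_lt_of_sq_lt_sq he4 (by linarith)
  have hs : 0 ≤ Real.sqrt ((aCoeff k - aCoeff (k+2)) ^ 2 + 4 * (epsCoeff k) ^ 2) :=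
    Real.sqrt_nonneg _
  have hup : Real.sqrt ((aCoeff k - aCoeff (k+2)) ^ 2 + 4 * (epsCoeff k) ^ 2) ≤
      |aCoeff k - aCoeff (k+2)| + 2 * |epsCoeff k| := by
    have h1 : (aCoeff k - aCoeff (k+2)) ^ 2 + 4 * (epsCoeff k) ^ 2 ≤
        (|aCoeff k - aCoeff (k+2)| + 2 * |epsCoeff k|) ^ 2 := by
      nlinarith [mul_nonneg (abs_nonneg (aCoeff k - aCoeff (k+2))) (abs_nonneg (epsCoeff k)),
        sq_abs (aCoeff k - aCoeff (k+2)), sq_abs (epsCoeff k)]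
    calc Real.sqrt ((aCoeff k - aCoeff (k+2)) ^ 2 + 4 * (epsCoeff k) ^ 2)
        ≤ Real.sqrt ((|aCoeff k - aCoeff (k+2)| + 2 * |epsCoeff k|) ^ 2) := Real.sqrt_le_sqrt h1
      _ = |aCoeff k - aCoeff (k+2)| + 2 * |epsCoeff k| := Real.sqrt_sq (by positivity)
  have hdet : epsCoeff k ^ 2 < aCoeff k * aCoeff (k+2) := by
    nlinarith [sq_abs (epsCoeff k), abs_nonneg (epsCoeff k)]
  refine ⟨⟨?_, ?_⟩, ⟨?_, ?_⟩, ⟨ha1, ha2⟩, ?_, ?_⟩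
  · unfold lamOne
    rcases abs_cases (aCoeff k - aCoeff (k+2)) with ⟨hab, hab'⟩ | ⟨hab, hab'⟩ <;>
      rcases abs_cases (epsCoeff k) with ⟨hee, hee'⟩ | ⟨hee, hee'⟩ <;> linarith
  · unfold lamOne; linarith
  · unfold lamTwo; linarith
  · unfold lamTwo
    rcases abs_cases (aCoeff k - aCoeff (k+2)) with ⟨hab, hab'⟩ | ⟨hab, hab'⟩ <;>
      rcases abs_cases (epsCoeff k) with ⟨hee, hee'⟩ | ⟨hee, hee'⟩ <;> linarith
  · ext i j
    fin_cases i <;> fin_cases j <;> rfl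
  · refine (Matrix.posDef_iff_dotProduct_mulVec (M := !![aCoeff k, epsCoeff k; epsCoeff k, aCoeff (k + 2)]).mpr
      ⟨by ext i j; fin_cases i <;> fin_cases j <;> rfl, fun v hv => ?_⟩).2
    have hv01 : v 0 ≠ 0 ∨ v 1 ≠ 0 := by
      by_contra hcon
      push_neg at hcon
      exact hv (funext fun i => by fin_cases i <;> simp [hcon.1, hcon.2])
    have expand : dotProduct (star v)
        ((!![aCoeff k, epsCoeff k; epsCoeff k, aCoeff (k + 2)] : Matrix (Fin 2) (Fin 2) ℝ) *ᵥ v) =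
        aCoeff k * (v 0) ^ 2 + 2 * epsCoeff k * (v 0) * (v 1) + aCoeff (k+2) * (v 1) ^ 2 := by
      simp [dotProduct, Matrix.mulVec, Fin.sum_univ_two]
      ring
    rw [expand]
    by_cases h1 : v 1 = 0
    · have h0 : v 0 ≠ 0 := by tauto
      have hv0 : 0 < v 0 ^ 2 := by positivity
      rw [h1]
      nlinarith [hv0]
    · have hv1 : 0 < v 1 ^ 2 := by positivity
      nlinarith [sq_nonneg (aCoeff k * v 0 + epsCoeff k * v 1),
        mul_pos (sub_pos.mpr hdet) hv1]
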